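/- Let r, n ∈ ℕ with r ≤ n/100. Any properly edge-coloured n-vertex graph G with minimum degree at least r contains n/100 pairwise edge-disjoint rainbow matchings each with r edges. -/

import Mathlib

open scoped Classical

/-- A colouring of edges is proper if edges sharing a vertex get distinct colours. -/
def ProperColoring {V : Type*} (G : SimpleGraph V) (c : Sym2 V → ℕ) : Prop :=
  ∀ ⦃a b b' : V⦄, G.Adj a b → G.Adj a b' → b ≠ b' → c s(a, b) ≠ c s(a, b')

/-- A set of edges is rainbow if its edges have pairwise distinct colours. -/
def IsRainbow {V : Type*} (c : Sym2 V → ℕ) (E : Set (Sym2 V)) : Prop :=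
  Set.InjOn c E

/-- A finite set of edges forms a matching: non-loops, pairwise vertex-disjoint. -/
def IsMatchingSet {V : Type*} (M : Finset (Sym2 V)) : Prop :=
  (∀ e ∈ M, ¬ e.IsDiag) ∧
  ∀ e ∈ M, ∀ f ∈ M, e ≠ f → ∀ v : V, v ∈ e → v ∉ f

/-- A class `U` of colours is `α`-rich in `G`: the edges of `G` with colour in `U`
contain a matching of size at least `α * |V|`. -/
def RichClass {V : Type*} [Fintype V] (G : SimpleGraph V) (c : Sym2 V → ℕ)
    (α : ℝ) (U : Set ℕ) : Prop :=
  ∃ M : Finset (Sym2 V), ↑M ⊆ G.edgeSet ∧ (∀ e ∈ M, c e ∈ U) ∧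
    IsMatchingSet M ∧ α * (Fintype.card V : ℝ) ≤ (M.card : ℝ)

/-- `G` is `α`-well-coloured: its colours can be partitioned into `|V| - 1`
pairwise disjoint `α`-rich classes. -/
def WellColoured {V : Type*} [Fintype V] (G : SimpleGraph V) (c : Sym2 V → ℕ)
    (α : ℝ) : Prop :=
  ∃ U : Fin (Fintype.card V - 1) → Set ℕ,
    (∀ i j, i ≠ j → Disjoint (U i) (U j)) ∧
    (∀ i, RichClass G c α (U i)) ∧
    (∀ e ∈ G.edgeSet, ∃ i, c e ∈ U i)

/-- A rainbow forest in `G`. -/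
def RainbowForest {V : Type*} (G : SimpleGraph V) (c : Sym2 V → ℕ)
    (F : SimpleGraph V) : Prop :=
  F ≤ G ∧ F.IsAcyclic ∧ IsRainbow c F.edgeSet

/-- `G` is `(α, t)`-robustly-coloured: after removing the edges of any `t`
rainbow forests, `G` remains `α`-well-coloured. -/
def RobustlyColoured {V : Type*} [Fintype V] (G : SimpleGraph V) (c : Sym2 V → ℕ)
    (α : ℝ) (t : ℕ) : Prop :=
  ∀ F : Fin t → SimpleGraph V, (∀ i, RainbowForest G c (F i)) →
    WellColoured (G.deleteEdges (⋃ i, (F i).edgeSet)) c α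

set_option linter.unusedSectionVars false
set_option maxHeartbeats 1000000

namespace Stmt9Aux

variable {V : Type*} [Fintype V] [DecidableEq V]

/-- vertex set of a finite set of edges -/
noncomputable def verts (M : Finset (Sym2 V)) : Finset V :=
  Finset.univ.filter fun v => ∃ e ∈ M, v ∈ e

lemma mem_verts {M : Finset (Sym2 V)} {v : V} : v ∈ verts M ↔ ∃ e ∈ M, v ∈ e := by
  simp [verts]

lemma verts_mono {M N : Finset (Sym2 V)} (h : M ⊆ N) : verts M ⊆ verts N := by
  intro v hv
  rw [mem_verts] at hv ⊢
  obtain ⟨e, he, hve⟩ := hv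
  exact ⟨e, h he, hve⟩

lemma card_verts_le (M : Finset (Sym2 V)) : (verts M).card ≤ 2 * M.card := by
  induction M using Finset.induction with
  | empty => simp [verts]
  | @insert e s he ih =>
    induction e using Sym2.ind with
    | _ x y =>
      have hsub : verts (insert s(x,y) s) ⊆ insert x (insert y (verts s)) := by
        intro v hv
        rw [mem_verts] at hv
        obtain ⟨e', he', hve'⟩ := hv
        rcases Finset.mem_insert.mp he' with h1 | h2
        · subst h1
          rcases Sym2.mem_iff.mp hve' with h | h <;> simp [h]
        · simp only [Finset.mem_insert]
          exact Or.inr (Or.inr (mem_verts.mpr ⟨e', h2, hve'⟩))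
      calc (verts (insert s(x,y) s)).card ≤ (insert x (insert y (verts s))).card :=
            Finset.card_le_card hsub
        _ ≤ (insert y (verts s)).card + 1 := Finset.card_insert_le _ _
        _ ≤ ((verts s).card + 1) + 1 := by
            have := Finset.card_insert_le y (verts s); omega
        _ ≤ 2 * (insert s(x,y) s).card := by
            rw [Finset.card_insert_of_notMem he]; omega

/-- greedy colouring of a "conflict graph" -/
lemma exists_greedy_coloring {α : Type*} [DecidableEq α] (T : ℕ) (conf : α → α → Prop)
    [inst : ∀ e f, Decidable (conf e f)]
    (hsym : ∀ a b, conf a b → conf b a) (S : Finset α)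
    (hd : ∀ e ∈ S, (S.filter fun f => f ≠ e ∧ conf e f).card < T) :
    ∃ col : α → ℕ, (∀ e ∈ S, col e < T) ∧
      ∀ e ∈ S, ∀ f ∈ S, e ≠ f → conf e f → col e ≠ col f := by
  induction S using Finset.induction with
  | empty => exact ⟨fun _ => 0, by simp, by simp⟩
  | @insert a s ha ih =>
    obtain ⟨col, h1, h2⟩ := ih (fun e he => by
      refine lt_of_le_of_lt (Finset.card_le_card ?_) (hd e (Finset.mem_insert_of_mem he))
      exact Finset.filter_subset_filter _ (Finset.subset_insert _ _))
    have hbadcard : ((s.filter fun f => conf a f).image col).card < T := by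
      have h3 : (s.filter fun f => conf a f) ⊆
          ((insert a s).filter fun f => f ≠ a ∧ conf a f) := by
        intro f hf
        rw [Finset.mem_filter] at hf ⊢
        refine ⟨Finset.mem_insert_of_mem hf.1, fun h => ?_, hf.2⟩
        · exact ha (h ▸ hf.1)
      calc ((s.filter fun f => conf a f).image col).card
          ≤ (s.filter fun f => conf a f).card := Finset.card_image_le
        _ ≤ _ := Finset.card_le_card h3
        _ < T := hd a (Finset.mem_insert_self a s)
    have hne : ∃ x ∈ Finset.range T, x ∉ (s.filter fun f => conf a f).image col := by
      by_contra hcon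
      push_neg at hcon
      have hsub : Finset.range T ⊆ (s.filter fun f => conf a f).image col := fun x hxx => hcon x hxx
      have := Finset.card_le_card hsub
      rw [Finset.card_range] at this
      omega
    obtain ⟨x, hx1, hx2⟩ := hne
    rw [Finset.mem_range] at hx1
    have hx : x < T ∧ x ∉ (s.filter fun f => conf a f).image col := ⟨hx1, hx2⟩
    refine ⟨fun e => if e = a then x else col e, ?_, ?_⟩
    · intro e he
      rcases Finset.mem_insert.mp he with h | h
      · simp [h, hx.1]
      · by_cases hea : e = a
        · simp [hea, hx.1]
        · simpa [hea] using h1 e h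
    · intro e he f hf hef hc
      intro hc2
      dsimp only at hc2
      rcases Finset.mem_insert.mp he with h | h <;> rcases Finset.mem_insert.mp hf with h' | h'
      · exact absurd (h.trans h'.symm) hef
      · have hfa : f ≠ a := fun hh => ha (hh ▸ h')
        rw [if_pos h, if_neg hfa] at hc2
        refine hx.2 (Finset.mem_image.mpr ⟨f, Finset.mem_filter.mpr ⟨h', ?_⟩, hc2.symm⟩)
        rw [h] at hc; exact hc
      · have hea : e ≠ a := fun hh => ha (hh ▸ h)
        rw [if_pos h', if_neg hea] at hc2
        refine hx.2 (Finset.mem_image.mpr ⟨e, Finset.mem_filter.mpr ⟨h, ?_⟩, hc2⟩)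
        rw [h'] at hc; exact hsym _ _ hc
      · have hea : e ≠ a := fun hh => ha (hh ▸ h)
        have hfa : f ≠ a := fun hh => ha (hh ▸ h')
        rw [if_neg hea, if_neg hfa] at hc2
        exact h2 e h f h' hef hc hc2


variable {V : Type*} [Fintype V] [DecidableEq V]

lemma proper_nbr {G : SimpleGraph V} {c : Sym2 V → ℕ} (hp : ProperColoring G c)
    {v w w' : V} (h : G.Adj v w) (h' : G.Adj v w')
    (hc : c s(v,w) = c s(v,w')) : w = w' := by
  by_contra hne
  exact hp h h' hne hc

lemma adj_of_mem_other {G : SimpleGraph V} {e : Sym2 V} (he : e ∈ G.edgeSet) {v : V}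
    (hv : v ∈ e) : G.Adj v (Sym2.Mem.other hv) := by
  rw [← SimpleGraph.mem_edgeSet, Sym2.other_spec hv]
  exact he

lemma proper_eq_of_mem {G : SimpleGraph V} {c : Sym2 V → ℕ} (hp : ProperColoring G c)
    {e f : Sym2 V} (he : e ∈ G.edgeSet) (hf : f ∈ G.edgeSet)
    {v : V} (hv : v ∈ e) (hv' : v ∈ f) (hc : c e = c f) : e = f := by
  have h1 := adj_of_mem_other he hv
  have h2 := adj_of_mem_other hf hv'
  have hcc : c s(v, Sym2.Mem.other hv) = c s(v, Sym2.Mem.other hv') := by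
    rw [Sym2.other_spec hv, Sym2.other_spec hv']; exact hc
  have h3 := proper_nbr hp h1 h2 hcc
  rw [← Sym2.other_spec hv, ← Sym2.other_spec hv', h3]

/-- pick an edge from a pairwise-disjoint family avoiding a vertex set and a used set -/
lemma exists_in_class (Q : Finset (Sym2 V))
    (hQ : ∀ e ∈ Q, ∀ f ∈ Q, e ≠ f → ∀ v, v ∈ e → v ∉ f)
    (A : Finset V) (U : Finset (Sym2 V))
    (hcard : A.card + (Q ∩ U).card < Q.card) :
    ∃ e ∈ Q, e ∉ U ∧ ∀ v ∈ e, v ∉ A := by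
  classical
  have hQne : Q.Nonempty := by
    apply Finset.card_pos.mp; omega
  obtain ⟨e₀, he₀⟩ := hQne
  haveI : Nonempty V := by
    induction e₀ using Sym2.ind with
    | _ x y => exact ⟨x⟩
  by_contra hcon
  push_neg at hcon
  have hsub : Q ⊆ (Q ∩ U) ∪ (Q.filter fun e => ∃ v, v ∈ e ∧ v ∈ A) := by
    intro e he
    by_cases heU : e ∈ U
    · exact Finset.mem_union_left _ (Finset.mem_inter.mpr ⟨he, heU⟩)
    · obtain ⟨v, hv1, hv2⟩ := hcon e he heU
      exact Finset.mem_union_right _ (Finset.mem_filter.mpr ⟨he, v, hv1, hv2⟩)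
  have hBadA : (Q.filter fun e => ∃ v, v ∈ e ∧ v ∈ A).card ≤ A.card := by
    refine Finset.card_le_card_of_injOn
      (fun e => if h : ∃ v, v ∈ e ∧ v ∈ A then h.choose else Classical.arbitrary V) ?_ ?_
    · intro e he
      have hh := (Finset.mem_filter.mp he).2
      simp only [dif_pos hh]
      exact hh.choose_spec.2
    · intro e he f hf hef
      have hhe := (Finset.mem_filter.mp (by exact_mod_cast he : e ∈ _)).2
      have hhf := (Finset.mem_filter.mp (by exact_mod_cast hf : f ∈ _)).2
      simp only [dif_pos hhe, dif_pos hhf] at hef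
      by_contra hne
      have hQe := (Finset.mem_filter.mp (by exact_mod_cast he : e ∈ _)).1
      have hQf := (Finset.mem_filter.mp (by exact_mod_cast hf : f ∈ _)).1
      have := hQ e hQe f hQf hne hhe.choose hhe.choose_spec.1
      rw [hef] at this
      exact this hhf.choose_spec.1
  have := Finset.card_le_card hsub
  have := Finset.card_union_le (Q ∩ U) (Q.filter fun e => ∃ v, v ∈ e ∧ v ∈ A)
  omega

/-- greedy step at a vertex: find a suitable neighbour -/
lemma exists_nbr_step {G : SimpleGraph V} {c : Sym2 V → ℕ} (hp : ProperColoring G c)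
    (v : V) (A : Finset V) (CC : Finset ℕ) (U : Finset (Sym2 V)) (u : ℕ)
    (hU : (U.filter (fun e => v ∈ e)).card ≤ u)
    (h : A.card + CC.card + u < G.degree v) :
    ∃ w, G.Adj v w ∧ w ∉ A ∧ c s(v,w) ∉ CC ∧ s(v,w) ∉ U := by
  classical
  set N := G.neighborFinset v with hN
  have hNcard : N.card = G.degree v := G.card_neighborFinset_eq_degree v
  by_contra hcon
  push_neg at hcon
  have hsub : N ⊆ (N.filter (· ∈ A)) ∪ (N.filter fun w => c s(v,w) ∈ CC)
      ∪ (N.filter fun w => s(v,w) ∈ U) := by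
    intro w hw
    have hadj : G.Adj v w := by rwa [hN, SimpleGraph.mem_neighborFinset] at hw
    by_cases h1 : w ∈ A
    · exact Finset.mem_union_left _ (Finset.mem_union_left _ (Finset.mem_filter.mpr ⟨hw, h1⟩))
    by_cases h2 : c s(v,w) ∈ CC
    · exact Finset.mem_union_left _ (Finset.mem_union_right _ (Finset.mem_filter.mpr ⟨hw, h2⟩))
    have h3 := hcon w hadj h1 h2
    exact Finset.mem_union_right _ (Finset.mem_filter.mpr ⟨hw, h3⟩)
  have hc1 : (N.filter (· ∈ A)).card ≤ A.card := by
    refine Finset.card_le_card_of_injOn id ?_ ?_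
    · intro w hw; exact (Finset.mem_filter.mp hw).2
    · intro a _ b _ hab; exact hab
  have hc2 : (N.filter fun w => c s(v,w) ∈ CC).card ≤ CC.card := by
    refine Finset.card_le_card_of_injOn (fun w => c s(v,w)) ?_ ?_
    · intro w hw; exact (Finset.mem_filter.mp hw).2
    · intro a ha b hb hab
      have ha' : G.Adj v a := by
        have := (Finset.mem_filter.mp (by exact_mod_cast ha : a ∈ _)).1
        rwa [hN, SimpleGraph.mem_neighborFinset] at this
      have hb' : G.Adj v b := by
        have := (Finset.mem_filter.mp (by exact_mod_cast hb : b ∈ _)).1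
        rwa [hN, SimpleGraph.mem_neighborFinset] at this
      exact proper_nbr hp ha' hb' hab
  have hc3 : (N.filter fun w => s(v,w) ∈ U).card ≤ (U.filter (fun e => v ∈ e)).card := by
    refine Finset.card_le_card_of_injOn (fun w => s(v,w)) ?_ ?_
    · intro w hw
      refine Finset.mem_filter.mpr ⟨(Finset.mem_filter.mp hw).2, ?_⟩
      simp
    · intro a _ b _ hab
      exact Sym2.congr_right.mp hab
  have h4 := Finset.card_le_card hsub
  have h5 := Finset.card_union_le ((N.filter (· ∈ A)) ∪ (N.filter fun w => c s(v,w) ∈ CC))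
      (N.filter fun w => s(v,w) ∈ U)
  have h6 := Finset.card_union_le (N.filter (· ∈ A)) (N.filter fun w => c s(v,w) ∈ CC)
  omega

/-- a matching has at most one edge at each vertex -/
lemma matching_filter_vertex {M : Finset (Sym2 V)}
    (hM : ∀ e ∈ M, ∀ f ∈ M, e ≠ f → ∀ v, v ∈ e → v ∉ f) (v : V) :
    (M.filter (fun e => v ∈ e)).card ≤ 1 := by
  refine Finset.card_le_one.mpr ?_
  intro e he f hf
  have he' := Finset.mem_filter.mp he
  have hf' := Finset.mem_filter.mp hf
  by_contra hne
  exact hM e he'.1 f hf'.1 hne v he'.2 hf'.2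

/-- a rainbow set has at most one edge of each colour -/
lemma rainbow_filter_color {c : Sym2 V → ℕ} {M : Finset (Sym2 V)}
    (hM : ∀ e ∈ M, ∀ f ∈ M, c e = c f → e = f) (α : ℕ) :
    (M.filter (fun e => c e = α)).card ≤ 1 := by
  refine Finset.card_le_one.mpr ?_
  intro e he f hf
  have he' := Finset.mem_filter.mp he
  have hf' := Finset.mem_filter.mp hf
  exact hM e he'.1 f hf'.1 (he'.2.trans hf'.2.symm)


lemma sum_div_ge (ρ T K : ℕ) (hρ : 0 < ρ) (m : ℕ → ℕ)
    (h : ρ * (K + T) ≤ ∑ t ∈ Finset.range T, m t) :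
    K ≤ ∑ t ∈ Finset.range T, m t / ρ := by
  have h1 : ∀ t ∈ Finset.range T, m t ≤ ρ * (m t / ρ) + (ρ - 1) := by
    intro t _
    have h2 := Nat.div_add_mod (m t) ρ
    have h3 := Nat.mod_lt (m t) hρ
    omega
  have h4 : ∑ t ∈ Finset.range T, m t ≤
      ∑ t ∈ Finset.range T, (ρ * (m t / ρ) + (ρ - 1)) := Finset.sum_le_sum h1
  rw [Finset.sum_add_distrib, ← Finset.mul_sum, Finset.sum_const, Finset.card_range,
    smul_eq_mul] at h4
  by_contra hcon
  push_neg at hcon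
  set Q := ∑ t ∈ Finset.range T, m t / ρ with hQ
  set S := ∑ t ∈ Finset.range T, m t with hSS
  have h5 : Q + 1 ≤ K := hcon
  have h6 : ρ * (Q + 1) ≤ ρ * K := Nat.mul_le_mul_left ρ h5
  have hA : ρ * (K + T) = ρ * K + ρ * T := by ring
  have hB : ρ * (Q + 1) = ρ * Q + ρ := by ring
  have hC : T * (ρ - 1) = T * ρ - T := by
    rw [Nat.mul_sub]; ring_nf
  have hD : ρ * T = T * ρ := by ring
  have hT : T ≤ T * ρ := Nat.le_mul_of_pos_right T hρ
  rw [hA] at h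
  rw [hB] at h6
  rw [hC] at h4
  omega

lemma exists_chunks {α : Type*} [DecidableEq α] (ρ T : ℕ) (hρ : 0 < ρ) (col : α → ℕ) :
    ∀ (K : ℕ) (S : Finset α), K ≤ ∑ t ∈ Finset.range T, (S.filter fun e => col e = t).card / ρ →
    ∃ Bf : Fin K → Finset α,
      (∀ i, Bf i ⊆ S ∧ (Bf i).card = ρ ∧ ∃ t, ∀ e ∈ Bf i, col e = t) ∧
      ∀ i₁ i₂, i₁ ≠ i₂ → ∀ x ∈ Bf i₁, x ∉ Bf i₂ := by
  intro K
  induction K with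
  | zero =>
    exact fun S _ => ⟨Fin.elim0, fun i => i.elim0, fun i => i.elim0⟩
  | succ K ih =>
    intro S hS
    -- find a fiber with at least ρ elements
    have hex : ∃ t₀ ∈ Finset.range T, ρ ≤ (S.filter fun e => col e = t₀).card := by
      by_contra hcon
      push_neg at hcon
      have : ∀ t ∈ Finset.range T, (S.filter fun e => col e = t).card / ρ = 0 := by
        intro t ht
        exact Nat.div_eq_of_lt (hcon t ht)
      rw [Finset.sum_congr rfl this] at hS
      simp at hS
    obtain ⟨t₀, ht₀T, ht₀⟩ := hex
    obtain ⟨B, hBsub, hBcard⟩ := Finset.exists_subset_card_eq ht₀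
    have hBS : B ⊆ S := hBsub.trans (Finset.filter_subset _ _)
    have hBcol : ∀ e ∈ B, col e = t₀ := fun e he => (Finset.mem_filter.mp (hBsub he)).2
    set S' := S \ B with hS'
    have hfib : ∀ t ∈ Finset.range T, t ≠ t₀ →
        (S'.filter fun e => col e = t) = (S.filter fun e => col e = t) := by
      intro t _ htne
      ext e
      simp only [Finset.mem_filter, hS', Finset.mem_sdiff]
      constructor
      · rintro ⟨⟨h1, _⟩, h3⟩; exact ⟨h1, h3⟩
      · rintro ⟨h1, h3⟩
        refine ⟨⟨h1, fun hB => ?_⟩, h3⟩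
        exact htne (h3 ▸ (hBcol e hB) ▸ rfl)
    have hfib₀ : (S'.filter fun e => col e = t₀) = (S.filter fun e => col e = t₀) \ B := by
      ext e
      simp only [Finset.mem_filter, hS', Finset.mem_sdiff]
      tauto
    have hdiv₀ : ((S'.filter fun e => col e = t₀)).card / ρ
        = ((S.filter fun e => col e = t₀)).card / ρ - 1 := by
      rw [hfib₀, Finset.card_sdiff_of_subset hBsub, hBcard]
      rw [Nat.div_eq_sub_div hρ ht₀, Nat.add_sub_cancel]
    have hsum' : K ≤ ∑ t ∈ Finset.range T, ((S'.filter fun e => col e = t)).card / ρ := by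
      have e1 : ∑ t ∈ Finset.range T, ((S.filter fun e => col e = t)).card / ρ
          = ((S.filter fun e => col e = t₀)).card / ρ
            + ∑ t ∈ (Finset.range T).erase t₀, ((S.filter fun e => col e = t)).card / ρ :=
        (Finset.add_sum_erase _ _ ht₀T).symm
      have e2 : ∑ t ∈ Finset.range T, ((S'.filter fun e => col e = t)).card / ρ
          = ((S'.filter fun e => col e = t₀)).card / ρ
            + ∑ t ∈ (Finset.range T).erase t₀, ((S'.filter fun e => col e = t)).card / ρ :=
        (Finset.add_sum_erase _ _ ht₀T).symm
      have e3 : ∑ t ∈ (Finset.range T).erase t₀, ((S'.filter fun e => col e = t)).card / ρ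
          = ∑ t ∈ (Finset.range T).erase t₀, ((S.filter fun e => col e = t)).card / ρ := by
        refine Finset.sum_congr rfl ?_
        intro t ht
        rw [hfib t (Finset.mem_of_mem_erase ht) (Finset.ne_of_mem_erase ht)]
      have hd1 : 1 ≤ ((S.filter fun e => col e = t₀)).card / ρ :=
        Nat.one_le_div_iff hρ |>.mpr ht₀
      omega
    obtain ⟨Bf', hBf1, hBf2⟩ := ih S' hsum'
    refine ⟨Fin.cons B Bf', ?_, ?_⟩
    · intro i
      refine Fin.cases ?_ ?_ i
      · rw [Fin.cons_zero]
        exact ⟨hBS, hBcard, t₀, hBcol⟩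
      · intro i'
        rw [Fin.cons_succ]
        obtain ⟨hsub, hcard, ht⟩ := hBf1 i'
        exact ⟨hsub.trans (Finset.sdiff_subset), hcard, ht⟩
    · intro i₁ i₂ hne
      rcases Fin.eq_zero_or_eq_succ i₁ with h1 | ⟨j₁, rfl⟩ <;>
        rcases Fin.eq_zero_or_eq_succ i₂ with h2 | ⟨j₂, rfl⟩
      · exact absurd (h1.trans h2.symm) hne
      · subst h1
        rw [Fin.cons_zero, Fin.cons_succ]
        intro x hx hx2
        have := (hBf1 j₂).1 hx2
        rw [hS', Finset.mem_sdiff] at this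
        exact this.2 hx
      · subst h2
        rw [Fin.cons_zero, Fin.cons_succ]
        intro x hx hx2
        have := (hBf1 j₁).1 hx
        rw [hS', Finset.mem_sdiff] at this
        exact this.2 hx2
      · rw [Fin.cons_succ, Fin.cons_succ]
        have hne' : j₁ ≠ j₂ := fun h => hne (by rw [h])
        exact hBf2 j₁ j₂ hne'

variable {V : Type*} [Fintype V] [DecidableEq V]

lemma sym2_exists_rep (e : Sym2 V) : ∃ x y : V, e = s(x,y) := by
  induction e using Sym2.ind with
  | _ x y => exact ⟨x, y, rfl⟩

lemma sym2_exists_mem (e : Sym2 V) : ∃ v, v ∈ e := by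
  obtain ⟨x, y, rfl⟩ := sym2_exists_rep e
  exact ⟨x, by simp⟩

def PDset (M : Finset (Sym2 V)) : Prop :=
  ∀ e ∈ M, ∀ f ∈ M, e ≠ f → ∀ v : V, v ∈ e → v ∉ f

def RBWset (c : Sym2 V → ℕ) (M : Finset (Sym2 V)) : Prop :=
  ∀ e ∈ M, ∀ f ∈ M, c e = c f → e = f

lemma pd_insert {M : Finset (Sym2 V)} {e : Sym2 V} (hM : PDset M)
    (h : ∀ v, v ∈ e → v ∉ verts M) : PDset (insert e M) := by
  intro e1 he1 e2 he2 hne v hv1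
  rcases Finset.mem_insert.mp he1 with rfl | he1' <;>
    rcases Finset.mem_insert.mp he2 with rfl | he2'
  · exact absurd rfl hne
  · intro hv2; exact h v hv1 (mem_verts.mpr ⟨e2, he2', hv2⟩)
  · intro hv2; exact h v hv2 (mem_verts.mpr ⟨e1, he1', hv1⟩)
  · exact hM e1 he1' e2 he2' hne v hv1

lemma not_mem_of_fresh_verts {M : Finset (Sym2 V)} {e : Sym2 V}
    (h : ∀ v, v ∈ e → v ∉ verts M) : e ∉ M := by
  obtain ⟨v, hv⟩ := sym2_exists_mem e
  intro he
  exact h v hv (mem_verts.mpr ⟨e, he, hv⟩)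

lemma rbw_insert {c : Sym2 V → ℕ} {M : Finset (Sym2 V)} {e : Sym2 V}
    (hM : RBWset c M) (h : ∀ f ∈ M, c f ≠ c e) : RBWset c (insert e M) := by
  intro e1 he1 e2 he2 hc
  rcases Finset.mem_insert.mp he1 with rfl | h1 <;>
    rcases Finset.mem_insert.mp he2 with rfl | h2
  · rfl
  · exact absurd hc.symm (h e2 h2)
  · exact absurd hc (h e1 h1)
  · exact hM e1 h1 e2 h2 hc

lemma card_filter_biUnion_le {β : Type*} [DecidableEq β] (j : ℕ) (Mf : ℕ → Finset β)
    (p : β → Prop) [DecidablePred p] (h : ∀ i, i < j → ((Mf i).filter p).card ≤ 1) :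
    (((Finset.range j).biUnion Mf).filter p).card ≤ j := by
  have hsub : ((Finset.range j).biUnion Mf).filter p ⊆
      (Finset.range j).biUnion (fun i => (Mf i).filter p) := by
    intro e he
    rw [Finset.mem_filter, Finset.mem_biUnion] at he
    obtain ⟨⟨i, hi, hei⟩, hp⟩ := he
    exact Finset.mem_biUnion.mpr ⟨i, hi, Finset.mem_filter.mpr ⟨hei, hp⟩⟩
  calc (((Finset.range j).biUnion Mf).filter p).card
      ≤ ((Finset.range j).biUnion (fun i => (Mf i).filter p)).card := Finset.card_le_card hsub
    _ ≤ ∑ i ∈ Finset.range j, ((Mf i).filter p).card := Finset.card_biUnion_le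
    _ ≤ ∑ _i ∈ Finset.range j, 1 :=
        Finset.sum_le_sum (fun i hi => h i (Finset.mem_range.mp hi))
    _ = j := by simp

lemma card_edges_at_le_degree (G : SimpleGraph V) [DecidableRel G.Adj]
    {S : Finset (Sym2 V)} (hS : S ⊆ G.edgeFinset) (x : V) :
    (S.filter (fun e => x ∈ e)).card ≤ G.degree x := by
  rw [← SimpleGraph.card_neighborFinset_eq_degree]
  classical
  refine Finset.card_le_card_of_injOn
    (fun e => if h : x ∈ e then Sym2.Mem.other h else x) ?_ ?_
  · intro e he
    have hxe : x ∈ e := (Finset.mem_filter.mp he).2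
    have hE : e ∈ G.edgeSet := SimpleGraph.mem_edgeFinset.mp (hS (Finset.mem_filter.mp he).1)
    simp only [dif_pos hxe]
    rw [Finset.mem_coe, SimpleGraph.mem_neighborFinset]
    exact adj_of_mem_other hE hxe
  · intro e he f hf hef
    have hxe : x ∈ e := (Finset.mem_filter.mp (by exact_mod_cast he : e ∈ _)).2
    have hxf : x ∈ f := (Finset.mem_filter.mp (by exact_mod_cast hf : f ∈ _)).2
    simp only [dif_pos hxe, dif_pos hxf] at hef
    rw [← Sym2.other_spec hxe, ← Sym2.other_spec hxf, hef]


abbrev RoundGood {V : Type*} [Fintype V] [DecidableEq V] (G : SimpleGraph V)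
    [Fintype ↑G.edgeSet] (c : Sym2 V → ℕ)
    (r : ℕ) (BIGsel : Finset ℕ) (FAT₂ : Finset V) (bn : ℕ → Finset (Sym2 V)) (i : ℕ)
    (M : Finset (Sym2 V)) : Prop :=
  M.card = r ∧ PDset M ∧ RBWset c M ∧ M ⊆ G.edgeFinset ∧ bn i ⊆ M ∧
    ∀ e ∈ M, e ∈ bn i ∨ c e ∈ BIGsel ∨ ∃ v ∈ FAT₂, v ∈ e

end Stmt9Aux

open Stmt9Aux in
theorem stmt9 {V : Type*} [Fintype V] [DecidableEq V] (G : SimpleGraph V)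
    (c : Sym2 V → ℕ) (r : ℕ)
    (hr : (r : ℝ) ≤ (Fintype.card V : ℝ) / 100)
    (hproper : ProperColoring G c)
    (hdeg : ∀ v : V, r ≤ G.degree v) :
    ∃ (k : ℕ) (M : Fin k → Finset (Sym2 V)),
      (Fintype.card V : ℝ) / 100 ≤ (k : ℝ) ∧
      (∀ i, ↑(M i) ⊆ G.edgeSet ∧ IsMatchingSet (M i) ∧
        Set.InjOn c ↑(M i) ∧ (M i).card = r) ∧
      (∀ i j, i ≠ j → Disjoint (M i) (M j)) := by
  classical
  by_cases hr0 : r = 0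
  · subst hr0
    refine ⟨Fintype.card V + 1, fun _ => ∅, ?_, ?_, ?_⟩
    · have h1 : (0:ℝ) ≤ (Fintype.card V : ℝ) := Nat.cast_nonneg _
      push_cast
      linarith
    · intro i
      refine ⟨by simp, ⟨by simp, by simp⟩, by simp [Set.InjOn], by simp⟩
    · intro i j hij
      simp
  have hr1 : 1 ≤ r := Nat.one_le_iff_ne_zero.mpr hr0
  set n := Fintype.card V with hnn
  have h100 : 100 * r ≤ n := by
    have h2 : (r:ℝ) * 100 ≤ (n:ℝ) := by
      rw [← le_div_iff₀ (by norm_num : (0:ℝ) < 100)]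
      exact hr
    have h3 : ((100 * r : ℕ) : ℝ) ≤ (n : ℝ) := by push_cast; linarith
    exact_mod_cast h3
  have hn100 : 100 ≤ n := by omega
  set k := n / 100 + 1 with hk
  set FAT : Finset V := Finset.univ.filter (fun v => n ≤ 10 * G.degree v) with hFAT
  have hmemFAT : ∀ v : V, v ∈ FAT ↔ n ≤ 10 * G.degree v := by
    intro v; rw [hFAT]; simp [Finset.mem_filter]
  set φ := min FAT.card r with hφ
  obtain ⟨FAT₂, hF2sub, hF2card⟩ :=
    Finset.exists_subset_card_eq (show φ ≤ FAT.card from min_le_left _ _)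
  have hφr : φ ≤ r := min_le_right _ _
  set ρ := r - φ with hρ
  set EH : Finset (Sym2 V) := G.edgeFinset.filter (fun e => ∀ v ∈ e, v ∉ FAT) with hEH
  have hmemEH : ∀ e : Sym2 V, e ∈ EH ↔ (e ∈ G.edgeFinset ∧ ∀ v ∈ e, v ∉ FAT) := by
    intro e; rw [hEH]; exact Finset.mem_filter
  set cls : ℕ → Finset (Sym2 V) := fun α => EH.filter (fun e => c e = α) with hcls
  have hmemcls : ∀ (α : ℕ) (e : Sym2 V), e ∈ cls α ↔ (e ∈ EH ∧ c e = α) := by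
    intro α e; rw [hcls]; exact Finset.mem_filter
  set τ := 2 * r + k with hτ
  set BIG : Finset ℕ := (EH.image c).filter (fun α => τ + 1 ≤ (cls α).card) with hBIG
  have hmemBIG : ∀ α : ℕ, α ∈ BIG ↔ (α ∈ EH.image c ∧ τ + 1 ≤ (cls α).card) := by
    intro α; rw [hBIG]; exact Finset.mem_filter
  set b := min BIG.card ρ with hb
  obtain ⟨BIGsel, hBsub, hBcard⟩ :=
    Finset.exists_subset_card_eq (show b ≤ BIG.card from min_le_left _ _)
  have hbρ : b ≤ ρ := min_le_right _ _
  set ρ' := ρ - b with hρ'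
  set EH' : Finset (Sym2 V) := EH.filter (fun e => c e ∉ BIGsel) with hEH'
  have hmemEH' : ∀ e : Sym2 V, e ∈ EH' ↔ (e ∈ EH ∧ c e ∉ BIGsel) := by
    intro e; rw [hEH']; exact Finset.mem_filter
  -- basic facts
  have hF2fat : ∀ v ∈ FAT₂, v ∈ FAT := fun v hv => hF2sub hv
  have hEHsub : EH ⊆ G.edgeFinset := by
    intro e he; exact ((hmemEH e).mp he).1
  have hEH'EH : EH' ⊆ EH := by
    intro e he; exact ((hmemEH' e).mp he).1
  have hEHfat : ∀ e ∈ EH, ∀ v, v ∈ e → v ∉ FAT := by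
    intro e he v hv
    exact ((hmemEH e).mp he).2 v hv
  have hclsEH : ∀ α : ℕ, cls α ⊆ EH := by
    intro α e he; exact ((hmemcls α e).mp he).1
  have hclscol : ∀ (α : ℕ), ∀ e ∈ cls α, c e = α := by
    intro α e he; exact ((hmemcls α e).mp he).2
  have hcls_pd : ∀ α : ℕ, PDset (cls α) := by
    intro α e he f hf hne v hv hvf
    have he' : e ∈ G.edgeSet := SimpleGraph.mem_edgeFinset.mp (hEHsub (hclsEH α he))
    have hf' : f ∈ G.edgeSet := SimpleGraph.mem_edgeFinset.mp (hEHsub (hclsEH α hf))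
    exact hne (proper_eq_of_mem hproper he' hf' hv hvf
      ((hclscol α e he).trans (hclscol α f hf).symm))
  have hBIGcard : ∀ α ∈ BIGsel, τ + 1 ≤ (cls α).card := by
    intro α hα
    exact ((hmemBIG α).mp (hBsub hα)).2
  have hfatdeg : ∀ v ∈ FAT₂, 4 * r + k ≤ G.degree v := by
    intro v hv
    have h1 : n ≤ 10 * G.degree v := (hmemFAT v).mp (hF2fat v hv)
    have h2 : 10 * (4 * r + k) ≤ n := by omega
    omega
  -- /// BLOCKS ///
  have hblocks : ∃ bn : ℕ → Finset (Sym2 V),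
      (∀ i, i < k → bn i ⊆ EH' ∧ (bn i).card = ρ' ∧ PDset (bn i) ∧ RBWset c (bn i)) ∧
      (∀ i₁ i₂, i₁ < k → i₂ < k → i₁ ≠ i₂ → ∀ x ∈ bn i₁, x ∉ bn i₂) := by
    by_cases hρ'0 : ρ' = 0
    · refine ⟨fun _ => ∅, ?_, ?_⟩
      · intro i _
        refine ⟨Finset.empty_subset _, by simp [hρ'0], ?_, ?_⟩
        · intro e he; simp at he
        · intro e he; simp at he
      · intro i₁ i₂ _ _ _ x hx; simp at hx
    · have hρ'pos : 0 < ρ' := Nat.pos_of_ne_zero hρ'0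
      have hbBIG : BIGsel = BIG := by
        apply Finset.eq_of_subset_of_card_le hBsub
        rw [hBcard]
        omega
      have hFATcard : FAT.card = φ := by omega
      obtain ⟨H', hadj⟩ : ∃ H' : SimpleGraph V, ∀ a bb : V,
          H'.Adj a bb ↔ (s(a,bb) ∈ EH' ∧ a ≠ bb) := by
        refine ⟨⟨fun a bb => s(a,bb) ∈ EH' ∧ a ≠ bb, ?_, ?_⟩, fun _ _ => Iff.rfl⟩
        · refine ⟨fun a bb h => ?_⟩
          refine ⟨?_, h.2.symm⟩
          rw [Sym2.eq_swap]
          exact h.1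
        · refine ⟨fun a h => ?_⟩
          exact h.2 rfl
      have hedgeq : H'.edgeFinset = EH' := by
        ext e
        obtain ⟨x, y, rfl⟩ := sym2_exists_rep e
        rw [SimpleGraph.mem_edgeFinset, SimpleGraph.mem_edgeSet, hadj]
        constructor
        · exact fun h => h.1
        · intro h
          refine ⟨h, ?_⟩
          have hnd : ¬ (s(x,y)).IsDiag := G.not_isDiag_of_mem_edgeSet
            (SimpleGraph.mem_edgeFinset.mp (hEHsub (hEH'EH h)))
          rwa [Sym2.mk_isDiag_iff] at hnd
      have hdegH : ∀ v, v ∉ FAT → ρ' ≤ H'.degree v := by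
        intro v hv
        rw [← SimpleGraph.card_neighborFinset_eq_degree]
        have hWsub : (G.neighborFinset v).filter (fun w => w ∉ FAT ∧ c s(v,w) ∉ BIGsel)
            ⊆ H'.neighborFinset v := by
          intro w hw
          have hw1 := Finset.mem_filter.mp hw
          have hadjvw : G.Adj v w := (G.mem_neighborFinset v w).mp hw1.1
          rw [SimpleGraph.mem_neighborFinset, hadj]
          refine ⟨?_, hadjvw.ne⟩
          refine (hmemEH' _).mpr ⟨?_, hw1.2.2⟩
          refine (hmemEH _).mpr ⟨?_, ?_⟩
          · rw [SimpleGraph.mem_edgeFinset, SimpleGraph.mem_edgeSet]; exact hadjvw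
          · intro u hu
            rcases Sym2.mem_iff.mp hu with rfl | rfl
            · exact hv
            · exact hw1.2.1
        have hcompl : ((G.neighborFinset v).filter
            (fun w => ¬(w ∉ FAT ∧ c s(v,w) ∉ BIGsel))).card ≤ φ + b := by
          have hsplit : (G.neighborFinset v).filter (fun w => ¬(w ∉ FAT ∧ c s(v,w) ∉ BIGsel))
              ⊆ ((G.neighborFinset v).filter (fun w => w ∈ FAT))
                ∪ ((G.neighborFinset v).filter (fun w => c s(v,w) ∈ BIGsel)) := by
            intro w hw
            have h1 := Finset.mem_filter.mp hw
            by_cases hwf : w ∈ FAT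
            · exact Finset.mem_union_left _ (Finset.mem_filter.mpr ⟨h1.1, hwf⟩)
            · refine Finset.mem_union_right _ (Finset.mem_filter.mpr ⟨h1.1, ?_⟩)
              by_contra hcc
              exact h1.2 ⟨hwf, hcc⟩
          have hcard1 : ((G.neighborFinset v).filter (fun w => w ∈ FAT)).card ≤ φ := by
            rw [← hFATcard]
            exact Finset.card_le_card_of_injOn id (fun w hw => (Finset.mem_filter.mp hw).2)
              (fun a _ bb _ h => h)
          have hcard2 : ((G.neighborFinset v).filter (fun w => c s(v,w) ∈ BIGsel)).card ≤ b := by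
            rw [← hBcard]
            refine Finset.card_le_card_of_injOn (fun w => c s(v,w))
              (fun w hw => (Finset.mem_filter.mp hw).2) ?_
            intro a ha bb hbb hab
            have ha' : G.Adj v a := (G.mem_neighborFinset v a).mp
              (Finset.mem_filter.mp (by exact_mod_cast ha : a ∈ _)).1
            have hb' : G.Adj v bb := (G.mem_neighborFinset v bb).mp
              (Finset.mem_filter.mp (by exact_mod_cast hbb : bb ∈ _)).1
            exact proper_nbr hproper ha' hb' hab
          calc ((G.neighborFinset v).filter (fun w => ¬(w ∉ FAT ∧ c s(v,w) ∉ BIGsel))).card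
              ≤ (((G.neighborFinset v).filter (fun w => w ∈ FAT))
                ∪ ((G.neighborFinset v).filter (fun w => c s(v,w) ∈ BIGsel))).card :=
                Finset.card_le_card hsplit
            _ ≤ ((G.neighborFinset v).filter (fun w => w ∈ FAT)).card
                + ((G.neighborFinset v).filter (fun w => c s(v,w) ∈ BIGsel)).card :=
                Finset.card_union_le _ _
            _ ≤ φ + b := Nat.add_le_add hcard1 hcard2
        have hpart := Finset.card_filter_add_card_filter_not
          (s := G.neighborFinset v) (p := fun w => w ∉ FAT ∧ c s(v,w) ∉ BIGsel)
        rw [SimpleGraph.card_neighborFinset_eq_degree] at hpart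
        have hdegv := hdeg v
        have hW := Finset.card_le_card hWsub
        omega
      have hslimcard : (Finset.univ.filter (fun v => v ∉ FAT)).card = n - φ := by
        have hsd : Finset.univ.filter (fun v => v ∉ FAT) = Finset.univ \ FAT := by
          ext v; simp
        rw [hsd, Finset.card_sdiff_of_subset (Finset.subset_univ _), Finset.card_univ, ← hnn, hFATcard]
      have hsumdeg : (n - φ) * ρ' ≤ 2 * EH'.card := by
        have h1 : ∑ v : V, H'.degree v = 2 * H'.edgeFinset.card :=
          SimpleGraph.sum_degrees_eq_twice_card_edges H'
        rw [hedgeq] at h1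
        have h2 : (Finset.univ.filter (fun v => v ∉ FAT)).card * ρ'
            ≤ ∑ v ∈ Finset.univ.filter (fun v => v ∉ FAT), H'.degree v := by
          rw [← smul_eq_mul]
          exact Finset.card_nsmul_le_sum _ _ _
            (fun v hv => hdegH v (Finset.mem_filter.mp hv).2)
        have h3 : ∑ v ∈ Finset.univ.filter (fun v => v ∉ FAT), H'.degree v
            ≤ ∑ v : V, H'.degree v :=
          Finset.sum_le_sum_of_subset (Finset.filter_subset _ _)
        rw [hslimcard] at h2
        omega
      set T := (n-1)/10 + (n-1)/10 + τ + 1 with hT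
      have hconf : ∀ e ∈ EH', (EH'.filter fun f => f ≠ e ∧
          ((∃ v, v ∈ e ∧ v ∈ f) ∨ c e = c f)).card < T := by
        intro e he
        obtain ⟨x, y, rfl⟩ := sym2_exists_rep e
        have hxslim : x ∉ FAT := hEHfat _ (hEH'EH he) x (by simp)
        have hyslim : y ∉ FAT := hEHfat _ (hEH'EH he) y (by simp)
        have hsub2 : (EH'.filter fun f => f ≠ s(x,y) ∧
            ((∃ v, v ∈ s(x,y) ∧ v ∈ f) ∨ c s(x,y) = c f))
            ⊆ ((EH'.filter (fun f => x ∈ f)) ∪ (EH'.filter (fun f => y ∈ f)))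
              ∪ (EH'.filter (fun f => c f = c s(x,y))) := by
          intro f hf
          have hf0 := Finset.mem_filter.mp hf
          rcases hf0.2.2 with ⟨v, hv1, hv2⟩ | hcc
          · rcases Sym2.mem_iff.mp hv1 with rfl | rfl
            · exact Finset.mem_union_left _
                (Finset.mem_union_left _ (Finset.mem_filter.mpr ⟨hf0.1, hv2⟩))
            · exact Finset.mem_union_left _
                (Finset.mem_union_right _ (Finset.mem_filter.mpr ⟨hf0.1, hv2⟩))
          · exact Finset.mem_union_right _ (Finset.mem_filter.mpr ⟨hf0.1, hcc.symm⟩)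
        have hdx : (EH'.filter (fun f => x ∈ f)).card ≤ (n-1)/10 := by
          have h1 : (EH'.filter (fun f => x ∈ f)).card ≤ G.degree x :=
            card_edges_at_le_degree G (fun e' he' => hEHsub (hEH'EH he')) x
          have h2 : ¬ (n ≤ 10 * G.degree x) := fun hcc => hxslim ((hmemFAT x).mpr hcc)
          omega
        have hdy : (EH'.filter (fun f => y ∈ f)).card ≤ (n-1)/10 := by
          have h1 : (EH'.filter (fun f => y ∈ f)).card ≤ G.degree y :=
            card_edges_at_le_degree G (fun e' he' => hEHsub (hEH'EH he')) y
          have h2 : ¬ (n ≤ 10 * G.degree y) := fun hcc => hyslim ((hmemFAT y).mpr hcc)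
          omega
        have hdc : (EH'.filter (fun f => c f = c s(x,y))).card ≤ τ := by
          have hsub3 : EH'.filter (fun f => c f = c s(x,y)) ⊆ cls (c s(x,y)) := by
            intro f hf
            have h1 := Finset.mem_filter.mp hf
            exact (hmemcls _ _).mpr ⟨hEH'EH h1.1, h1.2⟩
          have h2 : c s(x,y) ∉ BIG := by
            rw [← hbBIG]
            exact ((hmemEH' _).mp he).2
          have h3 : c s(x,y) ∈ EH.image c := Finset.mem_image_of_mem c (hEH'EH he)
          have h4 : ¬ (τ + 1 ≤ (cls (c s(x,y))).card) := by
            intro hcc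
            exact h2 ((hmemBIG _).mpr ⟨h3, hcc⟩)
          have h5 := Finset.card_le_card hsub3
          omega
        have h5 := Finset.card_le_card hsub2
        have h6 := Finset.card_union_le
          ((EH'.filter (fun f => x ∈ f)) ∪ (EH'.filter (fun f => y ∈ f)))
          (EH'.filter (fun f => c f = c s(x,y)))
        have h7 := Finset.card_union_le (EH'.filter (fun f => x ∈ f))
          (EH'.filter (fun f => y ∈ f))
        omega
      obtain ⟨col, hcol1, hcol2⟩ := exists_greedy_coloring T
        (fun e f => (∃ v, v ∈ e ∧ v ∈ f) ∨ c e = c f)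
        (by
          intro a bb h
          rcases h with ⟨v, h1, h2⟩ | h
          · exact Or.inl ⟨v, h2, h1⟩
          · exact Or.inr h.symm)
        EH' hconf
      have hfibsum : EH'.card = ∑ t ∈ Finset.range T, (EH'.filter (fun e => col e = t)).card :=
        Finset.card_eq_sum_card_fiberwise (fun e he => Finset.mem_range.mpr (hcol1 e he))
      have hEcard : ρ' * (k + T) ≤ ∑ t ∈ Finset.range T, (EH'.filter (fun e => col e = t)).card := by
        rw [← hfibsum]
        have hnT : 2 * (k + T) ≤ n - φ := by omega
        have h1 : (2 * (k + T)) * ρ' ≤ (n - φ) * ρ' := Nat.mul_le_mul_right _ hnT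
        have h3 : (2 * (k + T)) * ρ' = 2 * ((k + T) * ρ') := by ring
        have h4 : ρ' * (k + T) = (k + T) * ρ' := by ring
        omega
      obtain ⟨Bf, hBf1, hBf2⟩ := exists_chunks ρ' T hρ'pos col k EH'
        (sum_div_ge ρ' T k hρ'pos _ hEcard)
      refine ⟨fun i => if h : i < k then Bf ⟨i, h⟩ else ∅, ?_, ?_⟩
      · intro i hi
        have hbeta : (fun i => if h : i < k then Bf ⟨i, h⟩ else (∅ : Finset (Sym2 V))) i
            = Bf ⟨i, hi⟩ := dif_pos hi
        rw [hbeta]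
        obtain ⟨hsub, hcard, t, ht⟩ := hBf1 ⟨i, hi⟩
        refine ⟨hsub, hcard, ?_, ?_⟩
        · intro e he f hf hne v hv hvf
          have hcc := hcol2 e (hsub he) f (hsub hf) hne (Or.inl ⟨v, hv, hvf⟩)
          rw [ht e he, ht f hf] at hcc
          exact hcc rfl
        · intro e he f hf hcc0
          by_contra hne
          have hcc := hcol2 e (hsub he) f (hsub hf) hne (Or.inr hcc0)
          rw [ht e he, ht f hf] at hcc
          exact hcc rfl
      · intro i₁ i₂ h1 h2 hne x hx
        have hb1 : (fun i => if h : i < k then Bf ⟨i, h⟩ else (∅ : Finset (Sym2 V))) i₁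
            = Bf ⟨i₁, h1⟩ := dif_pos h1
        have hb2 : (fun i => if h : i < k then Bf ⟨i, h⟩ else (∅ : Finset (Sym2 V))) i₂
            = Bf ⟨i₂, h2⟩ := dif_pos h2
        rw [hb1] at hx
        rw [hb2]
        exact hBf2 ⟨i₁, h1⟩ ⟨i₂, h2⟩ (Fin.ne_of_val_ne hne) x hx
  obtain ⟨bn, hbn1, hbn2⟩ := hblocks
  -- /// MAIN INDUCTION ///
  have glob : ∀ j, j ≤ k → ∃ Mf : ℕ → Finset (Sym2 V),
      (∀ i, i < j → RoundGood G c r BIGsel FAT₂ bn i (Mf i)) ∧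
      (∀ i₁ i₂, i₁ < j → i₂ < j → i₁ ≠ i₂ → ∀ e ∈ Mf i₁, e ∉ Mf i₂) := by
    intro j
    induction j with
    | zero =>
      exact fun _ => ⟨fun _ => ∅, fun i hi => absurd hi (Nat.not_lt_zero i),
        fun i₁ i₂ h1 => absurd h1 (Nat.not_lt_zero _)⟩
    | succ j ih =>
      intro hjk
      have hjk' : j < k := hjk
      obtain ⟨Mf, hMf1, hMf2⟩ := ih (le_of_lt hjk')
      set U : Finset (Sym2 V) := (Finset.range j).biUnion Mf with hU
      have hUv : ∀ v : V, (U.filter (fun e => v ∈ e)).card ≤ j := by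
        intro v
        rw [hU]
        exact card_filter_biUnion_le j Mf _
          (fun i hi => matching_filter_vertex (hMf1 i hi).2.1 v)
      have hUc : ∀ α : ℕ, ((cls α) ∩ U).card ≤ j := by
        intro α
        have hsub9 : (cls α) ∩ U ⊆ U.filter (fun e => c e = α) := by
          intro e he
          have h1 := Finset.mem_inter.mp he
          exact Finset.mem_filter.mpr ⟨h1.2, hclscol α e h1.1⟩
        refine le_trans (Finset.card_le_card hsub9) ?_
        rw [hU]
        exact card_filter_biUnion_le j Mf _
          (fun i hi => rainbow_filter_color (hMf1 i hi).2.2.1 α)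
      have hUmem : ∀ i, i < j → ∀ e ∈ Mf i, e ∈ U := by
        intro i hi e he
        rw [hU]
        exact Finset.mem_biUnion.mpr ⟨i, Finset.mem_range.mpr hi, he⟩
      obtain ⟨hbase_sub, hbase_card, hbase_pd, hbase_rbw⟩ := hbn1 j hjk'
      -- phase: big colour classes
      have PB : ∀ B : Finset ℕ, B ⊆ BIGsel → ∃ P : Finset (Sym2 V),
          P ⊆ EH ∧ (∀ e ∈ P, c e ∈ B) ∧ P.card = B.card ∧
          PDset (bn j ∪ P) ∧ RBWset c (bn j ∪ P) ∧ (∀ e ∈ P, e ∉ U) := by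
        intro B
        induction B using Finset.induction with
        | empty =>
          intro _
          refine ⟨∅, Finset.empty_subset _, by simp, by simp, ?_, ?_, by simp⟩
          · rw [Finset.union_empty]; exact hbase_pd
          · rw [Finset.union_empty]; exact hbase_rbw
        | @insert α B' hα ihB =>
          intro hsubB
          obtain ⟨P', hP1, hP2, hP3, hP4, hP5, hP6⟩ :=
            ihB ((Finset.subset_insert α B').trans hsubB)
          have hαsel : α ∈ BIGsel := hsubB (Finset.mem_insert_self _ _)
          have hB'b : B'.card ≤ b := by
            rw [← hBcard]
            exact Finset.card_le_card ((Finset.subset_insert α B').trans hsubB)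
          have hAcard : (verts (bn j ∪ P')).card ≤ 2 * r := by
            refine le_trans (card_verts_le _) ?_
            have h1 : (bn j ∪ P').card ≤ ρ' + B'.card := by
              refine le_trans (Finset.card_union_le _ _) ?_
              omega
            omega
          obtain ⟨e, heQ, heU, heA⟩ := exists_in_class (cls α) (hcls_pd α)
            (verts (bn j ∪ P')) U (by
              have h1 := hUc α
              have h2 := hBIGcard α hαsel
              have h3 : ((cls α) ∩ U).card ≤ ((cls α) ∩ U).card := le_refl _
              omega)
          have hnotP' : e ∉ P' := by
            intro heP'
            obtain ⟨v, hv⟩ := sym2_exists_mem e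
            exact heA v hv (mem_verts.mpr ⟨e, Finset.mem_union_right _ heP', hv⟩)
          refine ⟨insert e P', ?_, ?_, ?_, ?_, ?_, ?_⟩
          · intro f hf
            rcases Finset.mem_insert.mp hf with rfl | hf'
            · exact hclsEH α heQ
            · exact hP1 hf'
          · intro f hf
            rcases Finset.mem_insert.mp hf with rfl | hf'
            · rw [hclscol α f heQ]
              exact Finset.mem_insert_self _ _
            · exact Finset.mem_insert_of_mem (hP2 f hf')
          · rw [Finset.card_insert_of_notMem hnotP', hP3,
              Finset.card_insert_of_notMem hα]
          · rw [Finset.union_insert]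
            exact pd_insert hP4 heA
          · rw [Finset.union_insert]
            refine rbw_insert hP5 ?_
            intro f hf hcf
            rw [hclscol α e heQ] at hcf
            rcases Finset.mem_union.mp hf with hfb | hfp
            · exact ((hmemEH' f).mp (hbase_sub hfb)).2 (hcf ▸ hαsel)
            · exact hα (hcf ▸ hP2 f hfp)
          · intro f hf
            rcases Finset.mem_insert.mp hf with rfl | hf'
            · exact heU
            · exact hP6 f hf'
      obtain ⟨Pbig, hPb1, hPb2, hPb3, hPb4, hPb5, hPb6⟩ := PB BIGsel (subset_refl _)
      have hbase2EH : ∀ e ∈ bn j ∪ Pbig, e ∈ EH := by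
        intro e he
        rcases Finset.mem_union.mp he with h | h
        · exact hEH'EH (hbase_sub h)
        · exact hPb1 h
      -- phase: fat vertices
      have PF : ∀ Fv : Finset V, Fv ⊆ FAT₂ → ∃ P : Finset (Sym2 V),
          P ⊆ G.edgeFinset ∧ P.card = Fv.card ∧ PDset ((bn j ∪ Pbig) ∪ P) ∧
          RBWset c ((bn j ∪ Pbig) ∪ P) ∧
          (∀ e ∈ P, e ∉ U) ∧ (∀ e ∈ P, ∃ v ∈ FAT₂, v ∈ e) ∧
          (∀ e ∈ P, ∀ x, x ∈ e → x ∈ FAT₂ → x ∈ Fv) := by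
        intro Fv
        induction Fv using Finset.induction with
        | empty =>
          intro _
          refine ⟨∅, by simp, by simp, ?_, ?_, by simp, by simp, by simp⟩
          · rw [Finset.union_empty]; exact hPb4
          · rw [Finset.union_empty]; exact hPb5
        | @insert v Fv' hv ihF =>
          intro hsubF
          obtain ⟨P', h1, h2, h3, h4, h5, h6, h7⟩ := ihF ((Finset.subset_insert _ _).trans hsubF)
          have hvF2 : v ∈ FAT₂ := hsubF (Finset.mem_insert_self _ _)
          have hvfresh : v ∉ verts ((bn j ∪ Pbig) ∪ P') := by
            rw [mem_verts]
            rintro ⟨e, he, hve⟩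
            rcases Finset.mem_union.mp he with h8 | h8
            · exact hEHfat e (hbase2EH e h8) v hve (hF2fat v hvF2)
            · exact hv (h7 e h8 v hve hvF2)
          have hcards : Fv'.card + 1 ≤ φ := by
            rw [← hF2card]
            have h8 := Finset.card_le_card hsubF
            rwa [Finset.card_insert_of_notMem hv] at h8
          obtain ⟨w, hadjw, hwA, hwc, hwU⟩ := exists_nbr_step hproper v
            (verts ((bn j ∪ Pbig) ∪ P') ∪ FAT₂) (((bn j ∪ Pbig) ∪ P').image c) U j (hUv v) (by
              have ha1 : (verts ((bn j ∪ Pbig) ∪ P')).card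
                  ≤ 2 * ((ρ' + b) + Fv'.card) := by
                refine le_trans (card_verts_le _) ?_
                have hb1 := Finset.card_union_le (bn j ∪ Pbig) P'
                have hb2 := Finset.card_union_le (bn j) Pbig
                have hb3 : Pbig.card = b := by rw [hPb3, hBcard]
                omega
              have ha2 : (((bn j ∪ Pbig) ∪ P').image c).card ≤ (ρ' + b) + Fv'.card := by
                refine le_trans Finset.card_image_le ?_
                have hb1 := Finset.card_union_le (bn j ∪ Pbig) P'
                have hb2 := Finset.card_union_le (bn j) Pbig
                have hb3 : Pbig.card = b := by rw [hPb3, hBcard]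
                omega
              have ha3 := Finset.card_union_le (verts ((bn j ∪ Pbig) ∪ P')) FAT₂
              have ha4 := hfatdeg v hvF2
              omega)
          have hwA1 : w ∉ verts ((bn j ∪ Pbig) ∪ P') := by
            intro h8; exact hwA (Finset.mem_union_left _ h8)
          have hwA2 : w ∉ FAT₂ := by
            intro h8; exact hwA (Finset.mem_union_right _ h8)
          have hfresh : ∀ u, u ∈ s(v,w) → u ∉ verts ((bn j ∪ Pbig) ∪ P') := by
            intro u hu
            rcases Sym2.mem_iff.mp hu with rfl | rfl
            · exact hvfresh
            · exact hwA1
          have hnotP' : s(v,w) ∉ P' := by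
            intro h8
            exact hvfresh (mem_verts.mpr ⟨s(v,w), Finset.mem_union_right _ h8, by simp⟩)
          refine ⟨insert s(v,w) P', ?_, ?_, ?_, ?_, ?_, ?_, ?_⟩
          · intro f hf
            rcases Finset.mem_insert.mp hf with rfl | hf'
            · rw [SimpleGraph.mem_edgeFinset, SimpleGraph.mem_edgeSet]; exact hadjw
            · exact h1 hf'
          · rw [Finset.card_insert_of_notMem hnotP', Finset.card_insert_of_notMem hv, h2]
          · rw [Finset.union_insert]; exact pd_insert h3 hfresh
          · rw [Finset.union_insert]
            refine rbw_insert h4 ?_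
            intro f hf hcf
            exact hwc (hcf ▸ Finset.mem_image_of_mem c hf)
          · intro f hf
            rcases Finset.mem_insert.mp hf with rfl | hf'
            · exact hwU
            · exact h5 f hf'
          · intro f hf
            rcases Finset.mem_insert.mp hf with rfl | hf'
            · exact ⟨v, hvF2, by simp⟩
            · exact h6 f hf'
          · intro f hf x hx hxF
            rcases Finset.mem_insert.mp hf with rfl | hf'
            · rcases Sym2.mem_iff.mp hx with rfl | rfl
              · exact Finset.mem_insert_self _ _
              · exact absurd hxF hwA2
            · exact Finset.mem_insert_of_mem (h7 f hf' x hx hxF)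
      obtain ⟨Pfat, hf1, hf2, hf3, hf4, hf5, hf6, hf7⟩ := PF FAT₂ (subset_refl _)
      have hdisjbP : Disjoint (bn j) Pbig := by
        rw [Finset.disjoint_left]
        intro e he hePb
        exact ((hmemEH' e).mp (hbase_sub he)).2 (hPb2 e hePb)
      have hdisjb2F : Disjoint (bn j ∪ Pbig) Pfat := by
        rw [Finset.disjoint_left]
        intro e he heF
        obtain ⟨v, hvF, hve⟩ := hf6 e heF
        exact hEHfat e (hbase2EH e he) v hve (hF2fat v hvF)
      have hMjcard : ((bn j ∪ Pbig) ∪ Pfat).card = r := by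
        rw [Finset.card_union_of_disjoint hdisjb2F, Finset.card_union_of_disjoint hdisjbP,
          hbase_card, hPb3, hBcard, hf2, hF2card]
        omega
      have hMjGood : RoundGood G c r BIGsel FAT₂ bn j ((bn j ∪ Pbig) ∪ Pfat) := by
        refine ⟨hMjcard, hf3, hf4, ?_, ?_, ?_⟩
        · intro e he
          rcases Finset.mem_union.mp he with h8 | h8
          · exact hEHsub (hbase2EH e h8)
          · exact hf1 h8
        · intro e he
          exact Finset.mem_union_left _ (Finset.mem_union_left _ he)
        · intro e he
          rcases Finset.mem_union.mp he with h8 | h8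
          · rcases Finset.mem_union.mp h8 with h9 | h9
            · exact Or.inl h9
            · exact Or.inr (Or.inl (hPb2 e h9))
          · exact Or.inr (Or.inr (hf6 e h8))
      have hMjdisj : ∀ i, i < j → ∀ e ∈ (bn j ∪ Pbig) ∪ Pfat, e ∉ Mf i := by
        intro i hi e he heMi
        have heU : e ∈ U := hUmem i hi e heMi
        rcases Finset.mem_union.mp he with h8 | h9
        · rcases Finset.mem_union.mp h8 with hb8 | hp8
          · rcases (hMf1 i hi).2.2.2.2.2 e heMi with hc1 | hc2 | hc3
            · exact hbn2 i j (lt_trans hi hjk') hjk' (Nat.ne_of_lt hi) e hc1 hb8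
            · exact ((hmemEH' e).mp (hbase_sub hb8)).2 hc2
            · obtain ⟨v, hvF, hve⟩ := hc3
              exact hEHfat e (hEH'EH (hbase_sub hb8)) v hve (hF2fat v hvF)
          · exact hPb6 e hp8 heU
        · exact hf5 e h9 heU
      refine ⟨Function.update Mf j ((bn j ∪ Pbig) ∪ Pfat), ?_, ?_⟩
      · intro i hi
        rcases Nat.lt_succ_iff_lt_or_eq.mp hi with h8 | rfl
        · rw [Function.update_of_ne (Nat.ne_of_lt h8)]
          exact hMf1 i h8
        · rw [Function.update_self]
          exact hMjGood
      · intro i₁ i₂ hlt1 hlt2 hne e he heIn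
        rcases Nat.lt_succ_iff_lt_or_eq.mp hlt1 with h1' | rfl <;>
          rcases Nat.lt_succ_iff_lt_or_eq.mp hlt2 with h2' | rfl
        · rw [Function.update_of_ne (Nat.ne_of_lt h1')] at he
          rw [Function.update_of_ne (Nat.ne_of_lt h2')] at heIn
          exact hMf2 i₁ i₂ h1' h2' hne e he heIn
        · rw [Function.update_of_ne (Nat.ne_of_lt h1')] at he
          rw [Function.update_self] at heIn
          exact hMjdisj i₁ h1' e heIn he
        · rw [Function.update_self] at he
          rw [Function.update_of_ne (Nat.ne_of_lt h2')] at heIn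
          exact hMjdisj i₂ h2' e he heIn
        · exact absurd rfl hne
  obtain ⟨Mf, hMfin1, hMfin2⟩ := glob k (le_refl k)
  refine ⟨k, fun i => Mf i.1, ?_, ?_, ?_⟩
  · have h1 : n < 100 * k := by omega
    have h2 : (n:ℝ) < 100 * (k:ℝ) := by exact_mod_cast h1
    rw [div_le_iff₀ (by norm_num : (0:ℝ) < 100)]
    linarith
  · intro i
    obtain ⟨hcard, hPD, hRBW, hsubE, _, _⟩ := hMfin1 i.1 i.2
    refine ⟨?_, ⟨?_, ?_⟩, ?_, hcard⟩
    · intro e he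
      exact SimpleGraph.mem_edgeFinset.mp (hsubE (Finset.mem_coe.mp he))
    · intro e he
      exact G.not_isDiag_of_mem_edgeSet (SimpleGraph.mem_edgeFinset.mp (hsubE he))
    · exact hPD
    · intro e he f hf hcc
      exact hRBW e (Finset.mem_coe.mp he) f (Finset.mem_coe.mp hf) hcc
  · intro i jj hij
    rw [Finset.disjoint_left]
    intro e he heJ
    exact hMfin2 i.1 jj.1 i.2 jj.2 (fun h => hij (Fin.ext h)) e he heJ
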